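/- With g = D ⊕ D* the central extension with hyperbolic metric as above, (g,⟨·,·⟩) is Ricci-parallel: for all x,y,z ∈ g, ric(∇_x y, z) + ric(y, ∇_x z) = 0. -/

import Mathlib

/-- The Ricci tensor of a left-invariant metric determined by a connection `nabla`:
`ric(x,y) = tr (ξ ↦ ∇_ξ ∇_x y − ∇_x ∇_ξ y − ∇_{[ξ,x]} y)`. -/
noncomputable def ricci {g : Type*} [LieRing g] [LieAlgebra ℝ g]
    (nabla : g →ₗ[ℝ] g →ₗ[ℝ] g) (x y : g) : ℝ :=
  LinearMap.trace ℝ g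
    (nabla.flip (nabla x y) - nabla x ∘ₗ nabla.flip y +
      nabla.flip y ∘ₗ (LieAlgebra.ad ℝ g x : g →ₗ[ℝ] g))

/-- `nabla` is the Levi-Civita connection of the metric Lie algebra `(g, B)`
(Koszul formula). -/
def IsLeviCivita {g : Type*} [LieRing g] [LieAlgebra ℝ g]
    (B : g →ₗ[ℝ] g →ₗ[ℝ] ℝ) (nabla : g →ₗ[ℝ] g →ₗ[ℝ] g) : Prop :=
  ∀ x y z : g, 2 * B (nabla x y) z = B ⁅x, y⁆ z - B ⁅y, z⁆ x + B ⁅z, x⁆ y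

/-- Ricci-parallel: `(∇_x ric)(y,z) = −ric(∇_x y, z) − ric(y, ∇_x z) = 0`. -/
noncomputable def IsRicciParallel {g : Type*} [LieRing g] [LieAlgebra ℝ g]
    (nabla : g →ₗ[ℝ] g →ₗ[ℝ] g) : Prop :=
  ∀ x y z : g, ricci nabla (nabla x y) z + ricci nabla y (nabla x z) = 0


set_option maxHeartbeats 1000000

/-- The central extension g = D ⊕ D* with the hyperbolic metric is Ricci-parallel. -/
theorem stmt_5 (D : Type*) [LieRing D] [LieAlgebra ℝ D] [FiniteDimensional ℝ D]
    (g : Type*) [LieRing g] [LieAlgebra ℝ g] [FiniteDimensional ℝ g]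
    (θ : D →ₗ[ℝ] D →ₗ[ℝ] Module.Dual ℝ D)
    (hθalt : ∀ x : D, θ x x = 0)
    (hθcoc : ∀ x y z : D, θ ⁅x, y⁆ z + θ ⁅y, z⁆ x + θ ⁅z, x⁆ y = 0)
    (i : D →ₗ[ℝ] g) (j : Module.Dual ℝ D →ₗ[ℝ] g)
    (hsurj : ∀ w : g, ∃ (x : D) (f : Module.Dual ℝ D), w = i x + j f)
    (hbr : ∀ (x x' : D) (f f' : Module.Dual ℝ D),
      ⁅i x + j f, i x' + j f'⁆ = i ⁅x, x'⁆ + j (θ x x'))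
    (B : g →ₗ[ℝ] g →ₗ[ℝ] ℝ)
    (hB : ∀ (x x' : D) (f f' : Module.Dual ℝ D),
      B (i x + j f) (i x' + j f') = f x' + f' x)
    (hnd : ∀ w : g, (∀ z : g, B w z = 0) → w = 0)
    (nabla : g →ₗ[ℝ] g →ₗ[ℝ] g)
    (hLC : IsLeviCivita B nabla) :
    IsRicciParallel nabla := by
  classical
  set L : (D × Module.Dual ℝ D) →ₗ[ℝ] g :=
    i ∘ₗ LinearMap.fst ℝ D (Module.Dual ℝ D) + j ∘ₗ LinearMap.snd ℝ D (Module.Dual ℝ D) with hL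
  have hLapp : ∀ (x : D) (f : Module.Dual ℝ D), L (x, f) = i x + j f := by
    intro x f; simp [hL]
  have hLbij : Function.Bijective L := by
    constructor
    · rw [injective_iff_map_eq_zero]
      rintro ⟨x, f⟩ h0
      rw [hLapp] at h0
      have hBz : ∀ (y : D) (gg : Module.Dual ℝ D), f y + gg x = 0 := by
        intro y gg
        have h := hB x y f gg
        rw [h0] at h
        simpa using h.symm
      have hf : f = 0 := by
        ext y; simpa using hBz y 0
      have hx : x = 0 := by
        rw [← Module.forall_dual_apply_eq_zero_iff ℝ x]
        intro gg; simpa [hf] using hBz 0 gg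
      simp [hx, hf, Prod.ext_iff]
    · intro w; obtain ⟨x, f, rfl⟩ := hsurj w; exact ⟨(x, f), hLapp x f⟩
  set e := LinearEquiv.ofBijective L hLbij with he
  set p : g →ₗ[ℝ] D := LinearMap.fst ℝ D (Module.Dual ℝ D) ∘ₗ (e.symm : g →ₗ[ℝ] D × Module.Dual ℝ D) with hp
  set q : g →ₗ[ℝ] Module.Dual ℝ D := LinearMap.snd ℝ D (Module.Dual ℝ D) ∘ₗ (e.symm : g →ₗ[ℝ] D × Module.Dual ℝ D) with hq
  have hsymm : ∀ (x : D) (f : Module.Dual ℝ D), e.symm (i x + j f) = (x, f) := by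
    intro x f
    have h : e (x, f) = i x + j f := hLapp x f
    rw [← h, LinearEquiv.symm_apply_apply]
  have hpd : ∀ (x : D) (f : Module.Dual ℝ D), p (i x + j f) = x := by
    intro x f; simp [hp, hsymm]
  have hqd : ∀ (x : D) (f : Module.Dual ℝ D), q (i x + j f) = f := by
    intro x f; simp [hq, hsymm]
  have hpi : ∀ x : D, p (i x) = x := fun x => by simpa using hpd x 0
  have hpj : ∀ f, p (j f) = 0 := fun f => by simpa using hpd 0 f
  have hqi : ∀ x : D, q (i x) = 0 := fun x => by simpa using hqd x 0
  have hqj : ∀ f, q (j f) = f := fun f => by simpa using hqd 0 f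
  have hdec : ∀ w : g, i (p w) + j (q w) = w := by
    intro w; obtain ⟨x, f, rfl⟩ := hsurj w; rw [hpd, hqd]
  have hbr' : ∀ a b : g, ⁅a, b⁆ = i ⁅p a, p b⁆ + j (θ (p a) (p b)) := by
    intro a b
    calc ⁅a, b⁆ = ⁅i (p a) + j (q a), i (p b) + j (q b)⁆ := by rw [hdec, hdec]
    _ = i ⁅p a, p b⁆ + j (θ (p a) (p b)) := hbr _ _ _ _
  have hpbr : ∀ a b : g, p ⁅a, b⁆ = ⁅p a, p b⁆ := by
    intro a b; rw [hbr', hpd]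
  have hBw : ∀ w z : g, B w z = q w (p z) + q z (p w) := by
    intro w z
    calc B w z = B (i (p w) + j (q w)) (i (p z) + j (q z)) := by rw [hdec, hdec]
    _ = q w (p z) + q z (p w) := hB _ _ _ _
  have hcenL : ∀ (f : Module.Dual ℝ D) (w : g), ⁅j f, w⁆ = 0 := by
    intro f w
    rw [hbr', hpj]
    simp
  have hcenR : ∀ (w : g) (f : Module.Dual ℝ D), ⁅w, j f⁆ = 0 := by
    intro w f
    rw [hbr', hpj]
    simp
  have hsep : ∀ w z : g, (∀ u : g, B w u = B z u) → w = z := by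
    intro w z h
    have h0 : w - z = 0 := by
      apply hnd
      intro u
      have : B (w - z) u = B w u - B z u := by
        rw [map_sub, LinearMap.sub_apply]
      rw [this, h u, sub_self]
    exact sub_eq_zero.mp h0
  -- D-component of the connection
  have hNp : ∀ u v : g, p (nabla u v) = (2:ℝ)⁻¹ • ⁅p u, p v⁆ := by
    intro u v
    have key : ∀ φ : Module.Dual ℝ D, φ (p (nabla u v) - (2:ℝ)⁻¹ • ⁅p u, p v⁆) = 0 := by
      intro φ
      have hK := hLC u v (j φ)
      rw [hcenR v φ, hcenL φ u] at hK
      simp only [map_zero, LinearMap.zero_apply, sub_zero, add_zero] at hK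
      have h1 : B (nabla u v) (j φ) = φ (p (nabla u v)) := by
        rw [hBw, hpj, hqj]; simp
      have h2 : B ⁅u, v⁆ (j φ) = φ ⁅p u, p v⁆ := by
        rw [hBw, hpj, hqj, hpbr]; simp
      rw [h1, h2] at hK
      simp only [map_sub, map_smul, smul_eq_mul]
      linarith
    have := (Module.forall_dual_apply_eq_zero_iff ℝ
      (p (nabla u v) - (2:ℝ)⁻¹ • ⁅p u, p v⁆)).mp key
    exact sub_eq_zero.mp this
  -- connection with a central first argument
  have hNj : ∀ (f : Module.Dual ℝ D) (w : g),
      nabla (j f) w = j (-(2:ℝ)⁻¹ • (f ∘ₗ (LieAlgebra.ad ℝ D (p w) : D →ₗ[ℝ] D))) := by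
    intro f w
    apply hsep
    intro z
    have hK := hLC (j f) w z
    rw [hcenL f w] at hK
    have hz : ⁅z, j f⁆ = 0 := hcenR z f
    rw [hz] at hK
    simp only [map_zero, LinearMap.zero_apply, zero_sub, add_zero, neg_sub] at hK
    -- hK : 2 * B (nabla (j f) w) z = 0 - B ⁅w,z⁆ (j f)  (careful with exact form)
    have h1 : B ⁅w, z⁆ (j f) = f ⁅p w, p z⁆ := by
      rw [hBw, hpj, hqj, hpbr]; simp
    have h2 : B (j (-(2:ℝ)⁻¹ • (f ∘ₗ (LieAlgebra.ad ℝ D (p w) : D →ₗ[ℝ] D)))) z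
        = -(2:ℝ)⁻¹ * f ⁅p w, p z⁆ := by
      rw [hBw, hpj, hqj]
      simp [LieAlgebra.ad_apply]
    rw [h1] at hK
    rw [h2]
    linarith
  -- connection with a central second argument
  have hNjr : ∀ (u : g) (f : Module.Dual ℝ D),
      nabla u (j f) = j (-(2:ℝ)⁻¹ • (f ∘ₗ (LieAlgebra.ad ℝ D (p u) : D →ₗ[ℝ] D))) := by
    intro u f
    apply hsep
    intro z
    have hK := hLC u (j f) z
    rw [hcenR u f, hcenL f z] at hK
    simp only [map_zero, LinearMap.zero_apply, zero_sub, sub_zero] at hK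
    have h1 : B ⁅z, u⁆ (j f) = f ⁅p z, p u⁆ := by
      rw [hBw, hpj, hqj, hpbr]; simp
    have h2 : B (j (-(2:ℝ)⁻¹ • (f ∘ₗ (LieAlgebra.ad ℝ D (p u) : D →ₗ[ℝ] D)))) z
        = -(2:ℝ)⁻¹ * f ⁅p u, p z⁆ := by
      rw [hBw, hpj, hqj]
      simp [LieAlgebra.ad_apply]
    have h3 : f ⁅p z, p u⁆ = - f ⁅p u, p z⁆ := by
      rw [← lie_skew, map_neg]
    rw [h1, h3] at hK
    rw [h2]
    linarith
  -- trace decomposition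
  have hTr : ∀ A : g →ₗ[ℝ] g, LinearMap.trace ℝ g A =
      LinearMap.trace ℝ D (p ∘ₗ A ∘ₗ i) +
      LinearMap.trace ℝ (Module.Dual ℝ D) (q ∘ₗ A ∘ₗ j) := by
    intro A
    have hid : (i ∘ₗ p) + (j ∘ₗ q) = (LinearMap.id : g →ₗ[ℝ] g) := by
      ext w; simpa using hdec w
    have h1 : A = (A ∘ₗ i) ∘ₗ p + (A ∘ₗ j) ∘ₗ q := by
      ext w
      have := congrArg A (hdec w).symm
      simpa [map_add] using this
    calc LinearMap.trace ℝ g A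
        = LinearMap.trace ℝ g ((A ∘ₗ i) ∘ₗ p + (A ∘ₗ j) ∘ₗ q) := by rw [← h1]
      _ = LinearMap.trace ℝ g ((A ∘ₗ i) ∘ₗ p) + LinearMap.trace ℝ g ((A ∘ₗ j) ∘ₗ q) :=
          map_add _ _ _
      _ = LinearMap.trace ℝ D (p ∘ₗ (A ∘ₗ i)) +
          LinearMap.trace ℝ (Module.Dual ℝ D) (q ∘ₗ (A ∘ₗ j)) := by
          rw [LinearMap.trace_comp_comm' p (A ∘ₗ i), LinearMap.trace_comp_comm' q (A ∘ₗ j)]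
  -- the Ricci tensor formula: ric(u,v) = -(1/2) tr(ad(pu) ∘ ad(pv))
  have htrc : ∀ a b : D,
      LinearMap.trace ℝ D ((LieAlgebra.ad ℝ D a : D →ₗ[ℝ] D) ∘ₗ (LieAlgebra.ad ℝ D b : D →ₗ[ℝ] D))
        = LinearMap.trace ℝ D ((LieAlgebra.ad ℝ D b : D →ₗ[ℝ] D) ∘ₗ (LieAlgebra.ad ℝ D a : D →ₗ[ℝ] D)) := by
    intro a b
    rw [← Module.End.mul_eq_comp, ← Module.End.mul_eq_comp, LinearMap.trace_mul_comm]
  have htradbr : ∀ a b : D,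
      LinearMap.trace ℝ D (LieAlgebra.ad ℝ D ⁅a, b⁆ : D →ₗ[ℝ] D) = 0 := by
    intro a b
    have h : (LieAlgebra.ad ℝ D ⁅a, b⁆ : D →ₗ[ℝ] D)
        = (LieAlgebra.ad ℝ D a) * (LieAlgebra.ad ℝ D b)
          - (LieAlgebra.ad ℝ D b) * (LieAlgebra.ad ℝ D a) := by
      letI : LieRing (Module.End ℝ D) := LieRing.ofAssociativeRing
      have := (LieAlgebra.ad ℝ D).map_lie a b
      rw [this, Ring.lie_def]
    rw [h, map_sub, LinearMap.trace_mul_comm, sub_self]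
  have hric : ∀ u v : g, ricci nabla u v =
      -(2:ℝ)⁻¹ * LinearMap.trace ℝ D
        ((LieAlgebra.ad ℝ D (p u) : D →ₗ[ℝ] D) ∘ₗ (LieAlgebra.ad ℝ D (p v) : D →ₗ[ℝ] D)) := by
    intro u v
    have hE1 : p ∘ₗ (nabla.flip (nabla u v) - nabla u ∘ₗ nabla.flip v +
        nabla.flip v ∘ₗ (LieAlgebra.ad ℝ g u : g →ₗ[ℝ] g)) ∘ₗ i
        = (-(4:ℝ)⁻¹) • (LieAlgebra.ad ℝ D ⁅p u, p v⁆ : D →ₗ[ℝ] D)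
          + (4:ℝ)⁻¹ • ((LieAlgebra.ad ℝ D (p u) : D →ₗ[ℝ] D) ∘ₗ (LieAlgebra.ad ℝ D (p v) : D →ₗ[ℝ] D))
          + (-(2:ℝ)⁻¹) • ((LieAlgebra.ad ℝ D (p v) : D →ₗ[ℝ] D) ∘ₗ (LieAlgebra.ad ℝ D (p u) : D →ₗ[ℝ] D)) := by
      ext xx
      simp only [LinearMap.coe_comp, Function.comp_apply, LinearMap.sub_apply,
        LinearMap.add_apply, LinearMap.flip_apply, LinearMap.smul_apply,
        LieAlgebra.ad_apply, map_sub, map_add]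
      rw [hNp (i xx) (nabla u v), hNp u (nabla (i xx) v), hNp ⁅u, i xx⁆ v,
        hNp u v, hNp (i xx) v, hpbr, hpi]
      simp only [lie_smul, smul_smul]
      have s1 : ⁅xx, ⁅p u, p v⁆⁆ = -⁅⁅p u, p v⁆, xx⁆ := (lie_skew _ _).symm
      have s2 : ⁅xx, p v⁆ = -⁅p v, xx⁆ := (lie_skew _ _).symm
      have s3 : ⁅⁅p u, xx⁆, p v⁆ = -⁅p v, ⁅p u, xx⁆⁆ := (lie_skew _ _).symm
      rw [s1, s2, s3, lie_neg]
      module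
    have hE2 : q ∘ₗ (nabla.flip (nabla u v) - nabla u ∘ₗ nabla.flip v +
        nabla.flip v ∘ₗ (LieAlgebra.ad ℝ g u : g →ₗ[ℝ] g)) ∘ₗ j
        = Module.Dual.transpose (R := ℝ)
            ((-(4:ℝ)⁻¹) • (LieAlgebra.ad ℝ D ⁅p u, p v⁆ : D →ₗ[ℝ] D)
              + (-(4:ℝ)⁻¹) • ((LieAlgebra.ad ℝ D (p v) : D →ₗ[ℝ] D) ∘ₗ (LieAlgebra.ad ℝ D (p u) : D →ₗ[ℝ] D))) := by
      apply LinearMap.ext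
      intro f
      apply LinearMap.ext
      intro xx
      have T1 : q (nabla (j f) (nabla u v)) xx = -((4:ℝ)⁻¹ * f ⁅⁅p u, p v⁆, xx⁆) := by
        rw [hNj f (nabla u v), hqj]
        have hs : ⁅p (nabla u v), xx⁆ = (2:ℝ)⁻¹ • ⁅⁅p u, p v⁆, xx⁆ := by
          rw [hNp u v, smul_lie]
        simp only [LinearMap.smul_apply, LinearMap.coe_comp, Function.comp_apply,
          LieAlgebra.ad_apply, neg_smul, smul_eq_mul, hs, map_smul]
        ring
      have T2 : q (nabla u (nabla (j f) v)) xx = (4:ℝ)⁻¹ * f ⁅p v, ⁅p u, xx⁆⁆ := by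
        rw [hNj f v, hNjr u (-(2:ℝ)⁻¹ • (f ∘ₗ (LieAlgebra.ad ℝ D (p v) : D →ₗ[ℝ] D))), hqj]
        simp only [LinearMap.smul_apply, LinearMap.coe_comp, Function.comp_apply,
          LieAlgebra.ad_apply, neg_smul, smul_eq_mul, LinearMap.neg_apply]
        ring
      have T3 : q (nabla ⁅u, j f⁆ v) xx = 0 := by
        rw [hcenR u f]
        simp
      simp only [LinearMap.coe_comp, Function.comp_apply, LinearMap.sub_apply,
        LinearMap.add_apply, LinearMap.flip_apply, LieAlgebra.ad_apply, map_sub, map_add,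
        Module.Dual.transpose_apply, LinearMap.smul_apply, neg_smul, smul_eq_mul, map_smul,
        map_neg]
      rw [T1, T2, T3]
      simp only [LinearMap.neg_apply, LinearMap.smul_apply, Module.Dual.transpose_apply,
        LinearMap.coe_comp, Function.comp_apply, LieAlgebra.ad_apply, smul_eq_mul,
        LinearMap.comp_apply]
      ring
    rw [ricci, hTr, hE1, hE2, LinearMap.trace_transpose']
    simp only [map_add, map_smul, smul_eq_mul]
    rw [htradbr, htrc (p v) (p u)]
    ring
  have hinv : ∀ a b c : D,
      LinearMap.trace ℝ D
        ((LieAlgebra.ad ℝ D ⁅a, b⁆ : D →ₗ[ℝ] D) ∘ₗ (LieAlgebra.ad ℝ D c : D →ₗ[ℝ] D)) +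
      LinearMap.trace ℝ D
        ((LieAlgebra.ad ℝ D b : D →ₗ[ℝ] D) ∘ₗ (LieAlgebra.ad ℝ D ⁅a, c⁆ : D →ₗ[ℝ] D)) = 0 := by
    intro a b c
    set A := (LieAlgebra.ad ℝ D a : D →ₗ[ℝ] D) with hA
    set Bb := (LieAlgebra.ad ℝ D b : D →ₗ[ℝ] D) with hBb
    set C := (LieAlgebra.ad ℝ D c : D →ₗ[ℝ] D) with hC
    have hab : (LieAlgebra.ad ℝ D ⁅a, b⁆ : D →ₗ[ℝ] D) = A * Bb - Bb * A := by
      letI : LieRing (Module.End ℝ D) := LieRing.ofAssociativeRing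
      rw [(LieAlgebra.ad ℝ D).map_lie a b, Ring.lie_def]
    have hac : (LieAlgebra.ad ℝ D ⁅a, c⁆ : D →ₗ[ℝ] D) = A * C - C * A := by
      letI : LieRing (Module.End ℝ D) := LieRing.ofAssociativeRing
      rw [(LieAlgebra.ad ℝ D).map_lie a c, Ring.lie_def]
    rw [hab, hac, ← Module.End.mul_eq_comp, ← Module.End.mul_eq_comp, sub_mul, mul_sub,
      map_sub, map_sub]
    have e2 : LinearMap.trace ℝ D (Bb * (C * A)) = LinearMap.trace ℝ D ((A * Bb) * C) := by
      calc LinearMap.trace ℝ D (Bb * (C * A)) = LinearMap.trace ℝ D ((Bb * C) * A) := by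
            rw [mul_assoc]
        _ = LinearMap.trace ℝ D (A * (Bb * C)) := LinearMap.trace_mul_comm _ _ _
        _ = LinearMap.trace ℝ D ((A * Bb) * C) := by rw [mul_assoc]
    have e3 : LinearMap.trace ℝ D (Bb * (A * C)) = LinearMap.trace ℝ D ((Bb * A) * C) := by
      rw [mul_assoc]
    linarith
  intro X Y Z
  rw [hric, hric, hNp X Y, hNp X Z]
  have hsm1 : (LieAlgebra.ad ℝ D ((2:ℝ)⁻¹ • ⁅p X, p Y⁆) : D →ₗ[ℝ] D)
      = (2:ℝ)⁻¹ • (LieAlgebra.ad ℝ D ⁅p X, p Y⁆ : D →ₗ[ℝ] D) := by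
    simp [map_smul]
  have hsm2 : (LieAlgebra.ad ℝ D ((2:ℝ)⁻¹ • ⁅p X, p Z⁆) : D →ₗ[ℝ] D)
      = (2:ℝ)⁻¹ • (LieAlgebra.ad ℝ D ⁅p X, p Z⁆ : D →ₗ[ℝ] D) := by
    simp [map_smul]
  rw [hsm1, hsm2, LinearMap.smul_comp, LinearMap.comp_smul, map_smul, map_smul]
  have := hinv (p X) (p Y) (p Z)
  simp only [smul_eq_mul]
  linarith
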